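/- For any labelled Markov chain (X,L,τ,l) and all states x,y ∈ X, the behavioural distance satisfies bd(x,y) = sup_{i < ω} Γ^i(⊥)(x,y), where Γ^i(⊥) denotes the i-fold application of Γ to the constant-zero pseudometric ⊥. -/

import Mathlib

/-- A finitely supported, rational-valued probability distribution on `X`. -/
structure FinDist (X : Type*) where
  p : X → ℝ
  nonneg : ∀ x, 0 ≤ p x
  rat : ∀ x, ∃ q : ℚ, (q : ℝ) = p x
  supp : Finset X
  mem_supp : ∀ x, x ∈ supp ↔ p x ≠ 0
  sum_one : ∑ x ∈ supp, p x = 1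

/-- A labelled Markov chain with states `X` and labels `L`. -/
structure LMC (X : Type*) (L : Type*) where
  τ : X → FinDist X
  label : X → L

/-- Expectation `μ ⊨ h = ∑ x, μ(x)·h(x)`. -/
noncomputable def expv {X : Type*} (μ : FinDist X) (h : X → ℝ) : ℝ :=
  ∑ z ∈ μ.supp, μ.p z * h z

/-- A `[0,1]`-valued pseudometric on `X`. -/
structure PMet (X : Type*) where
  d : X → X → ℝ
  nonneg : ∀ x y, 0 ≤ d x y
  le_one : ∀ x y, d x y ≤ 1
  refl : ∀ x, d x x = 0
  symm : ∀ x y, d x y = d y x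
  triangle : ∀ x y z, d x z ≤ d x y + d y z

open Classical in
/-- The functional `Γ` (on underlying distance functions). -/
noncomputable def GammaFun {X L : Type*} (M : LMC X L) (d : X → X → ℝ) : X → X → ℝ :=
  fun x y =>
    if M.label x ≠ M.label y then 1
    else sSup { r : ℝ | ∃ h : X → ℝ, (∀ z, h z ∈ Set.Icc (0:ℝ) 1) ∧
      (∀ u v, |h u - h v| ≤ d u v) ∧ r = expv (M.τ x) h - expv (M.τ y) h }

section Aux
variable {X L : Type*} (M : LMC X L)

def gset (M : LMC X L) (d : X → X → ℝ) (x y : X) : Set ℝ :=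
  { r : ℝ | ∃ h : X → ℝ, (∀ z, h z ∈ Set.Icc (0:ℝ) 1) ∧
      (∀ u v, |h u - h v| ≤ d u v) ∧ r = expv (M.τ x) h - expv (M.τ y) h }

lemma gammaFun_eq {d : X → X → ℝ} {x y : X} (hl : M.label x = M.label y) :
    GammaFun M d x y = sSup (gset M d x y) := by
  simp [GammaFun, hl, gset]

lemma gammaFun_ne {d : X → X → ℝ} {x y : X} (hl : M.label x ≠ M.label y) :
    GammaFun M d x y = 1 := by
  simp [GammaFun, hl]

lemma FinDist.supp_nonempty {X : Type*} (μ : FinDist X) : μ.supp.Nonempty := by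
  rcases Finset.eq_empty_or_nonempty μ.supp with h | h
  · exfalso; have := μ.sum_one; rw [h] at this; simp at this
  · exact h

lemma expv_nonneg {X : Type*} (μ : FinDist X) {h : X → ℝ} (hh : ∀ z, 0 ≤ h z) :
    0 ≤ expv μ h :=
  Finset.sum_nonneg fun z _ => mul_nonneg (μ.nonneg z) (hh z)

lemma expv_le_one {X : Type*} (μ : FinDist X) {h : X → ℝ} (hh : ∀ z, h z ≤ 1) :
    expv μ h ≤ 1 := by
  calc expv μ h ≤ ∑ z ∈ μ.supp, μ.p z := by
        exact Finset.sum_le_sum fun z _ => by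
          calc μ.p z * h z ≤ μ.p z * 1 := by
                exact mul_le_mul_of_nonneg_left (hh z) (μ.nonneg z)
            _ = μ.p z := mul_one _
    _ = 1 := μ.sum_one

lemma expv_mono_on {X : Type*} (μ : FinDist X) {h g : X → ℝ}
    (hh : ∀ z ∈ μ.supp, h z ≤ g z) : expv μ h ≤ expv μ g :=
  Finset.sum_le_sum fun z hz => mul_le_mul_of_nonneg_left (hh z hz) (μ.nonneg z)

lemma expv_one_sub {X : Type*} (μ : FinDist X) (h : X → ℝ) :
    expv μ (fun z => 1 - h z) = 1 - expv μ h := by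
  unfold expv
  have : ∀ z, μ.p z * (1 - h z) = μ.p z - μ.p z * h z := fun z => by ring
  simp only [this, Finset.sum_sub_distrib, μ.sum_one]

lemma expv_sub_const {X : Type*} (μ : FinDist X) (h : X → ℝ) (c : ℝ) :
    expv μ (fun z => h z - c) = expv μ h - c := by
  unfold expv
  conv_rhs => rw [← mul_one c, ← μ.sum_one]
  rw [Finset.mul_sum, ← Finset.sum_sub_distrib]
  congr 1; ext z; ring

end Aux
section Gamma
variable {X L : Type*} (M : LMC X L)

lemma gset_bddAbove (d : X → X → ℝ) (x y : X) : BddAbove (gset M d x y) := by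
  refine ⟨1, fun r hr => ?_⟩
  obtain ⟨h, hbox, _, rfl⟩ := hr
  have h1 : expv (M.τ x) h ≤ 1 := expv_le_one _ fun z => (hbox z).2
  have h2 : 0 ≤ expv (M.τ y) h := expv_nonneg _ fun z => (hbox z).1
  linarith

lemma zero_mem_gset {d : X → X → ℝ} (hd : ∀ u v, 0 ≤ d u v) (x y : X) :
    (0:ℝ) ∈ gset M d x y := by
  refine ⟨fun _ => 0, fun z => ⟨le_refl _, zero_le_one⟩, fun u v => by simpa using hd u v, ?_⟩
  simp [expv]

lemma gamma_nonneg {d : X → X → ℝ} (hd : ∀ u v, 0 ≤ d u v) (x y : X) :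
    0 ≤ GammaFun M d x y := by
  by_cases hl : M.label x = M.label y
  · rw [gammaFun_eq M hl]
    exact le_csSup (gset_bddAbove M d x y) (zero_mem_gset M hd x y)
  · rw [gammaFun_ne M hl]; exact zero_le_one

lemma gamma_le_one (d : X → X → ℝ) (x y : X) : GammaFun M d x y ≤ 1 := by
  by_cases hl : M.label x = M.label y
  · rw [gammaFun_eq M hl]
    refine Real.sSup_le (fun r hr => ?_) zero_le_one
    obtain ⟨h, hbox, _, rfl⟩ := hr
    have h1 : expv (M.τ x) h ≤ 1 := expv_le_one _ fun z => (hbox z).2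
    have h2 : 0 ≤ expv (M.τ y) h := expv_nonneg _ fun z => (hbox z).1
    linarith
  · rw [gammaFun_ne M hl]

lemma gamma_mono {d d' : X → X → ℝ} (hd : ∀ u v, 0 ≤ d u v)
    (hle : ∀ u v, d u v ≤ d' u v) (x y : X) :
    GammaFun M d x y ≤ GammaFun M d' x y := by
  by_cases hl : M.label x = M.label y
  · rw [gammaFun_eq M hl, gammaFun_eq M hl]
    refine csSup_le_csSup (gset_bddAbove M d' x y) ⟨0, zero_mem_gset M hd x y⟩ ?_
    rintro r ⟨h, hbox, hne, rfl⟩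
    exact ⟨h, hbox, fun u v => (hne u v).trans (hle u v), rfl⟩
  · rw [gammaFun_ne M hl, gammaFun_ne M hl]

lemma gamma_refl {d : X → X → ℝ} (hd : ∀ u v, 0 ≤ d u v) (x : X) :
    GammaFun M d x x = 0 := by
  rw [gammaFun_eq M rfl]
  have : gset M d x x = {0} := by
    ext r
    constructor
    · rintro ⟨h, _, _, rfl⟩; simp only [Set.mem_singleton_iff, sub_self]
    · rintro rfl; exact zero_mem_gset M hd x x
  rw [this, csSup_singleton]

lemma gamma_symm (d : X → X → ℝ) (x y : X) :
    GammaFun M d x y = GammaFun M d y x := by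
  by_cases hl : M.label x = M.label y
  · rw [gammaFun_eq M hl, gammaFun_eq M hl.symm]
    congr 1
    have key : ∀ a b : X, gset M d a b ⊆ gset M d b a := by
      rintro a b r ⟨h, hbox, hne, rfl⟩
      refine ⟨fun z => 1 - h z, fun z => ⟨by simp only; linarith [(hbox z).2],
          by simp only; linarith [(hbox z).1]⟩, fun u v => ?_, ?_⟩
      · simpa [abs_sub_comm] using hne u v
      · rw [expv_one_sub, expv_one_sub]; ring
    exact le_antisymm (key x y) (key y x)
  · rw [gammaFun_ne M hl, gammaFun_ne M (fun h => hl h.symm)]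

lemma gamma_triangle {d : X → X → ℝ} (hd : ∀ u v, 0 ≤ d u v) (x y z : X) :
    GammaFun M d x z ≤ GammaFun M d x y + GammaFun M d y z := by
  by_cases hxy : M.label x = M.label y
  · by_cases hyz : M.label y = M.label z
    · rw [gammaFun_eq M (hxy.trans hyz), gammaFun_eq M hxy, gammaFun_eq M hyz]
      refine Real.sSup_le (fun r hr => ?_) ?_
      · obtain ⟨h, hbox, hne, rfl⟩ := hr
        have h1 : expv (M.τ x) h - expv (M.τ y) h ≤ sSup (gset M d x y) :=
          le_csSup (gset_bddAbove M d x y) ⟨h, hbox, hne, rfl⟩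
        have h2 : expv (M.τ y) h - expv (M.τ z) h ≤ sSup (gset M d y z) :=
          le_csSup (gset_bddAbove M d y z) ⟨h, hbox, hne, rfl⟩
        linarith
      · have h1 := le_csSup (gset_bddAbove M d x y) (zero_mem_gset M hd x y)
        have h2 := le_csSup (gset_bddAbove M d y z) (zero_mem_gset M hd y z)
        linarith
    · have h2 := gamma_nonneg M hd x y
      rw [gammaFun_ne M hyz]
      have := gamma_le_one M d x z
      linarith
  · have h2 := gamma_nonneg M hd y z
    rw [gammaFun_ne M hxy]
    have := gamma_le_one M d x z
    linarith

end Gamma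
section Chain
variable {X L : Type*} (M : LMC X L)

noncomputable def dIter (M : LMC X L) (i : ℕ) : X → X → ℝ :=
  (GammaFun M)^[i] (fun _ _ => 0)

lemma dIter_zero : dIter M 0 = fun _ _ => 0 := rfl

lemma dIter_succ (i : ℕ) : dIter M (i + 1) = GammaFun M (dIter M i) :=
  Function.iterate_succ_apply' _ _ _

lemma dIter_nonneg (i : ℕ) : ∀ u v, 0 ≤ dIter M i u v := by
  induction i with
  | zero => intro u v; exact le_refl 0
  | succ n ih => rw [dIter_succ]; exact gamma_nonneg M ih

lemma dIter_le_one (i : ℕ) : ∀ u v, dIter M i u v ≤ 1 := by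
  cases i with
  | zero => intro u v; exact zero_le_one
  | succ n => rw [dIter_succ]; exact gamma_le_one M _

lemma dIter_refl (i : ℕ) : ∀ u, dIter M i u u = 0 := by
  cases i with
  | zero => intro u; rfl
  | succ n => rw [dIter_succ]; exact gamma_refl M (dIter_nonneg M n)

lemma dIter_symm (i : ℕ) : ∀ u v, dIter M i u v = dIter M i v u := by
  cases i with
  | zero => intro u v; rfl
  | succ n => rw [dIter_succ]; exact gamma_symm M _

lemma dIter_triangle (i : ℕ) : ∀ u v w, dIter M i u w ≤ dIter M i u v + dIter M i v w := by
  cases i with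
  | zero => intro u v w; simp [dIter_zero]
  | succ n =>
      rw [dIter_succ]
      intro u v w
      exact gamma_triangle M (dIter_nonneg M n) u v w

lemma dIter_mono_succ (i : ℕ) : ∀ u v, dIter M i u v ≤ dIter M (i + 1) u v := by
  induction i with
  | zero => rw [dIter_succ, dIter_zero]; exact gamma_nonneg M (fun _ _ => le_refl 0)
  | succ n ih =>
      rw [dIter_succ, dIter_succ]
      exact gamma_mono M (dIter_nonneg M n) ih

lemma dIter_mono {i j : ℕ} (hij : i ≤ j) (u v : X) : dIter M i u v ≤ dIter M j u v :=
  monotone_nat_of_le_succ (fun n => dIter_mono_succ M n u v) hij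

noncomputable def dsup (M : LMC X L) : X → X → ℝ := fun u v => ⨆ i : ℕ, dIter M i u v

lemma dsup_bdd (u v : X) : BddAbove (Set.range fun i : ℕ => dIter M i u v) :=
  ⟨1, by rintro r ⟨i, rfl⟩; exact dIter_le_one M i u v⟩

lemma dIter_le_dsup (i : ℕ) (u v : X) : dIter M i u v ≤ dsup M u v :=
  le_ciSup (dsup_bdd M u v) i

lemma dsup_nonneg (u v : X) : 0 ≤ dsup M u v :=
  le_trans (dIter_nonneg M 0 u v) (dIter_le_dsup M 0 u v)

lemma dsup_le_one (u v : X) : dsup M u v ≤ 1 :=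
  ciSup_le fun i => dIter_le_one M i u v

lemma dsup_refl (u : X) : dsup M u u = 0 := by
  unfold dsup
  simp [dIter_refl M _ u]

lemma dsup_symm (u v : X) : dsup M u v = dsup M v u := by
  unfold dsup
  exact iSup_congr fun i => dIter_symm M i u v

lemma dsup_triangle (u v w : X) : dsup M u w ≤ dsup M u v + dsup M v w := by
  refine ciSup_le fun i => ?_
  calc dIter M i u w ≤ dIter M i u v + dIter M i v w := dIter_triangle M i u v w
    _ ≤ dsup M u v + dsup M v w :=
        add_le_add (dIter_le_dsup M i u v) (dIter_le_dsup M i v w)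

noncomputable def dsupPMet (M : LMC X L) : PMet X :=
  ⟨dsup M, dsup_nonneg M, dsup_le_one M, dsup_refl M, dsup_symm M, dsup_triangle M⟩

end Chain
section Continuity
variable {X L : Type*} (M : LMC X L)

lemma gamma_dsup_le (x y : X) : GammaFun M (dsup M) x y ≤ dsup M x y := by
  classical
  by_cases hl : M.label x = M.label y
  · rw [gammaFun_eq M hl]
    refine Real.sSup_le (fun r hr => ?_) (dsup_nonneg M x y)
    obtain ⟨h, hbox, hne, rfl⟩ := hr
    refine le_of_forall_pos_le_add fun ε hε => ?_
    -- choose a stage N approximating dsup within ε on the relevant finite set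
    have key : ∀ u v : X, ∃ n : ℕ, dsup M u v ≤ dIter M n u v + ε := by
      intro u v
      have h1 : dsup M u v - ε < ⨆ i : ℕ, dIter M i u v := by
        have := dsup_nonneg M u v
        show dsup M u v - ε < dsup M u v
        linarith
      obtain ⟨n, hn⟩ := exists_lt_of_lt_ciSup h1
      exact ⟨n, by linarith⟩
    choose f hf using key
    set S : Finset X := (M.τ x).supp ∪ (M.τ y).supp with hSdef
    have hS : S.Nonempty :=
      (FinDist.supp_nonempty (M.τ x)).mono Finset.subset_union_left
    set N : ℕ := S.sup fun u => S.sup fun v => f u v with hNdef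
    have hN : ∀ u ∈ S, ∀ v ∈ S, dsup M u v ≤ dIter M N u v + ε := by
      intro u hu v hv
      have h1 : f u v ≤ N :=
        le_trans (Finset.le_sup (f := fun v => f u v) hv)
          (Finset.le_sup (f := fun u => S.sup fun v => f u v) hu)
      exact le_trans (hf u v) (add_le_add_left (dIter_mono M h1 u v) ε)
    set dN : X → X → ℝ := dIter M N with hdN
    set A : X → ℝ := fun u => S.inf' hS (fun s => h s + dN u s) with hA
    set g : X → ℝ := fun u => min (A u) 1 with hg
    have hA_nonneg : ∀ u, 0 ≤ A u := by
      intro u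
      refine Finset.le_inf' hS _ fun s _ => ?_
      have := (hbox s).1
      have := dIter_nonneg M N u s
      linarith
    have hgbox : ∀ z, g z ∈ Set.Icc (0:ℝ) 1 :=
      fun z => ⟨le_min (hA_nonneg z) zero_le_one, min_le_right _ _⟩
    have hA_lip : ∀ u v, A u ≤ A v + dN u v := by
      intro u v
      obtain ⟨s₀, hs₀, hAv⟩ := Finset.exists_mem_eq_inf' hS (fun s => h s + dN v s)
      have htri : dN u s₀ ≤ dN u v + dN v s₀ := dIter_triangle M N u v s₀
      have hle : A u ≤ h s₀ + dN u s₀ := Finset.inf'_le _ hs₀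
      have hAv2 : A v = h s₀ + dN v s₀ := hAv
      linarith
    have hg_lip2 : ∀ u v, g u ≤ g v + dN u v := by
      intro u v
      have hc : 0 ≤ dN u v := dIter_nonneg M N u v
      rcases le_total (A v) 1 with hv1 | hv1
      · have : min (A v) 1 = A v := min_eq_left hv1
        rw [hg]; simp only
        rw [this]
        exact le_trans (min_le_left _ _) (hA_lip u v)
      · have : min (A v) 1 = 1 := min_eq_right hv1
        rw [hg]; simp only
        rw [this]
        have := min_le_right (A u) 1
        linarith
    have hg_lip : ∀ u v, |g u - g v| ≤ dN u v := by
      intro u v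
      rw [abs_sub_le_iff]
      constructor
      · linarith [hg_lip2 u v]
      · have h2 := hg_lip2 v u
        have hsym : dN v u = dN u v := dIter_symm M N v u
        linarith
    have hg_on_S : ∀ s ∈ S, h s - ε ≤ g s ∧ g s ≤ h s := by
      intro s hs
      constructor
      · refine le_min ?_ (by linarith [(hbox s).2])
        refine Finset.le_inf' hS _ fun t ht => ?_
        have h1 : h s - h t ≤ dsup M s t := le_trans (le_abs_self _) (hne s t)
        have h2 : dsup M s t ≤ dN s t + ε := hN s hs t ht
        linarith
      · have h1 : A s ≤ h s + dN s s := Finset.inf'_le _ hs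
        have h0 : dN s s = 0 := dIter_refl M N s
        exact le_trans (min_le_left _ _) (by linarith)
    have hx : expv (M.τ x) h - ε ≤ expv (M.τ x) g := by
      rw [← expv_sub_const]
      exact expv_mono_on _ fun z hz =>
        (hg_on_S z (Finset.mem_union_left _ hz)).1
    have hy : expv (M.τ y) g ≤ expv (M.τ y) h :=
      expv_mono_on _ fun z hz => (hg_on_S z (Finset.mem_union_right _ hz)).2
    have hmem : expv (M.τ x) g - expv (M.τ y) g ∈ gset M dN x y :=
      ⟨g, hgbox, hg_lip, rfl⟩
    have hle1 : expv (M.τ x) g - expv (M.τ y) g ≤ dIter M (N + 1) x y := by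
      rw [dIter_succ, gammaFun_eq M hl]
      exact le_csSup (gset_bddAbove M dN x y) hmem
    have hle2 : dIter M (N + 1) x y ≤ dsup M x y := dIter_le_dsup M (N + 1) x y
    linarith
  · rw [gammaFun_ne M hl]
    have h1 : dIter M 1 x y = 1 := by
      rw [dIter_succ, gammaFun_ne M hl]
    calc (1:ℝ) = dIter M 1 x y := h1.symm
      _ ≤ dsup M x y := dIter_le_dsup M 1 x y

end Continuity

/-- Kleene: `bd(x,y) = sup_i Γ^i(⊥)(x,y)`. -/
theorem bd_eq_iSup_iterate {X L : Type*} [Nonempty L] (M : LMC X L) (bd : PMet X)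
    (hfix : ∀ x y, GammaFun M bd.d x y = bd.d x y)
    (hleast : ∀ d : PMet X, (∀ x y, GammaFun M d.d x y = d.d x y) →
      ∀ x y, bd.d x y ≤ d.d x y)
    (x y : X) :
    bd.d x y = ⨆ i : ℕ, (GammaFun M)^[i] (fun _ _ => 0) x y := by
  show bd.d x y = dsup M x y
  have hbdle : ∀ u v, bd.d u v ≤ dsup M u v := by
    apply hleast (dsupPMet M)
    intro u v
    refine le_antisymm (gamma_dsup_le M u v) ?_
    refine ciSup_le fun i => ?_
    cases i with
    | zero => exact gamma_nonneg M (dsup_nonneg M) u v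
    | succ n =>
        rw [dIter_succ]
        exact gamma_mono M (dIter_nonneg M n) (fun a b => dIter_le_dsup M n a b) u v
  have hdsuple : ∀ i : ℕ, ∀ u v, dIter M i u v ≤ bd.d u v := by
    intro i
    induction i with
    | zero => intro u v; exact bd.nonneg u v
    | succ n ih =>
        intro u v
        rw [dIter_succ]
        calc GammaFun M (dIter M n) u v ≤ GammaFun M bd.d u v :=
              gamma_mono M (dIter_nonneg M n) ih u v
          _ = bd.d u v := hfix u v
  exact le_antisymm (hbdle x y) (ciSup_le fun i => hdsuple i x y)
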